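/- Let a < b be real numbers, let g : [a,b] → (0,∞) be a log-convex function with g(a) > g(b), and let μ be the Lebesgue measure on ℝ. Let α₂ ∈ (0,∞) be a solution of the equation ((b−a)·ln α − b·ln g(a) + a·ln g(b)) / (ln g(b) − ln g(a)) − a = α. Then the Sugeno integral satisfies (s)∫_{[a,b]} g dμ ≤ min(α₂, b − a). -/

import Mathlib

open MeasureTheory ENNReal Set

/-- The Sugeno (fuzzy) integral of `f` on `A` with respect to `μ`:
`(s)∫_A f dμ = ⨆ α, min (α, μ (A ∩ {x | f x ≥ α}))`. -/
noncomputable def sugenoIntegral {X : Type*} [MeasurableSpace X] (μ : Measure X)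
    (A : Set X) (f : X → ℝ≥0∞) : ℝ≥0∞ :=
  ⨆ α : ℝ≥0∞, min α (μ (A ∩ {x | α ≤ f x}))

theorem sugenoIntegral_le_of_logConvex_gt_Icc (a b : ℝ) (hab : a < b) (g : ℝ → ℝ)
    (hg_pos : ∀ x ∈ Icc a b, 0 < g x)
    (hg_logconvex : ∀ x ∈ Icc a b, ∀ y ∈ Icc a b, ∀ t ∈ Icc (0:ℝ) 1,
      g (t * x + (1 - t) * y) ≤ g x ^ t * g y ^ (1 - t))
    (hgab : g a > g b) (α₂ : ℝ) (hα₂ : 0 < α₂)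
    (heq : ((b - a) * Real.log α₂ - b * Real.log (g a) + a * Real.log (g b)) /
        (Real.log (g b) - Real.log (g a)) - a = α₂) :
    sugenoIntegral volume (Icc a b) (fun x => ENNReal.ofReal (g x)) ≤
      min (ENNReal.ofReal α₂) (ENNReal.ofReal (b - a)) := by
  have hga : 0 < g a := hg_pos a ⟨le_refl a, hab.le⟩
  have hgb : 0 < g b := hg_pos b ⟨hab.le, le_refl b⟩
  have hba : (0:ℝ) < b - a := sub_pos.2 hab
  have hD : Real.log (g b) - Real.log (g a) < 0 := by
    have := Real.log_lt_log hgb hgab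
    linarith
  set D := Real.log (g b) - Real.log (g a) with hDdef
  have hDne : D ≠ 0 := ne_of_lt hD
  have hkey : (b - a) * (Real.log α₂ - Real.log (g a)) = α₂ * D := by
    have h := heq
    field_simp at h
    rw [hDdef] at h ⊢
    linear_combination h
  have hchord : ∀ x ∈ Icc a b, Real.log (g x) ≤ Real.log (g a) + ((x - a)/(b - a)) * D := by
    intro x hx
    set t := (b - x)/(b - a) with ht
    have ht0 : 0 ≤ t := div_nonneg (by linarith [hx.2]) hba.le
    have ht1 : t ≤ 1 := (div_le_one hba).2 (by linarith [hx.1])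
    have hxe : x = t * a + (1 - t) * b := by
      have h' : ((b - x)/(b - a)) * (b - a) = b - x := div_mul_cancel₀ _ hba.ne'
      rw [ht]; linear_combination h'
    have h1 := hg_logconvex a ⟨le_rfl, hab.le⟩ b ⟨hab.le, le_rfl⟩ t ⟨ht0, ht1⟩
    rw [← hxe] at h1
    have hlog : Real.log (g x) ≤ t * Real.log (g a) + (1 - t) * Real.log (g b) := by
      calc Real.log (g x) ≤ Real.log (g a ^ t * g b ^ (1 - t)) :=
            Real.log_le_log (hg_pos x hx) h1
        _ = t * Real.log (g a) + (1 - t) * Real.log (g b) := by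
            rw [Real.log_mul (by positivity) (by positivity), Real.log_rpow hga,
              Real.log_rpow hgb]
    have h1t : 1 - t = (x - a)/(b - a) := by
      rw [eq_div_iff hba.ne', ht, sub_mul, div_mul_cancel₀ _ hba.ne']; ring
    calc Real.log (g x) ≤ t * Real.log (g a) + (1 - t) * Real.log (g b) := hlog
      _ = Real.log (g a) + (1 - t) * D := by rw [hDdef]; ring
      _ = Real.log (g a) + ((x - a)/(b - a)) * D := by rw [h1t]
  rw [sugenoIntegral]
  refine iSup_le fun α => le_min ?_ ((min_le_right _ _).trans ?_)
  · rcases le_or_gt α (ENNReal.ofReal α₂) with h | h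
    · exact (min_le_left _ _).trans h
    · refine (min_le_right _ _).trans ?_
      by_cases hα : α = ⊤
      · have he : Icc a b ∩ {x | α ≤ ENNReal.ofReal (g x)} = ∅ := by
          ext x
          simp [hα]
        rw [he]
        simp
      · have hr : α₂ < α.toReal := by
          have := (ENNReal.ofReal_lt_iff_lt_toReal hα₂.le hα).1 h
          exact this
        have hsub : Icc a b ∩ {x | α ≤ ENNReal.ofReal (g x)} ⊆ Icc a (a + α₂) := by
          rintro x ⟨hx, hxS⟩
          refine ⟨hx.1, ?_⟩
          have hgx : α.toReal ≤ g x := by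
            have := (ENNReal.le_ofReal_iff_toReal_le hα (hg_pos x hx).le).1 hxS
            exact this
          have hlr : Real.log α₂ ≤ Real.log α.toReal :=
            Real.log_le_log hα₂ hr.le
          have hlr2 : Real.log α.toReal ≤ Real.log (g x) :=
            Real.log_le_log (lt_trans hα₂ hr) hgx
          have hc := hchord x hx
          have h5 : (x - a) / (b - a) * D ≥ Real.log α₂ - Real.log (g a) := by
            linarith
          rw [ge_iff_le, div_mul_eq_mul_div, le_div_iff₀ hba] at h5
          nlinarith [h5, hkey, hD]
        calc volume (Icc a b ∩ {x | α ≤ ENNReal.ofReal (g x)}) ≤ volume (Icc a (a + α₂)) :=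
              measure_mono hsub
          _ = ENNReal.ofReal α₂ := by rw [Real.volume_Icc]; ring_nf
  · calc volume (Icc a b ∩ {x | α ≤ ENNReal.ofReal (g x)}) ≤ volume (Icc a b) :=
          measure_mono inter_subset_left
      _ = ENNReal.ofReal (b - a) := Real.volume_Icc
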